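/- Let Γ be a distance-biregular graph, ℓ ∈ {0,1}, and x ∈ V_ℓ. Then for every vertex y ∈ V and every 0 ≤ m ≤ D_ℓ one has ν^x(y) = q_{ℓ,m} if and only if d(x,y) = m, where q_{ℓ,m} = Σ_{j=1}^{m} (n − B_{ℓ,j−1})/(k_{ℓ,j}·c_{ℓ,j}) = Σ_{j=0}^{m−1} (n − B_{ℓ,j})/(k_{ℓ,j}·b_{ℓ,j}). In particular q_{ℓ,1} = (n−1)/k_ℓ and q_{ℓ,2} = (n−1)/k_ℓ + (n−1−k_ℓ)/(k_ℓ(k_{ℓ̄}−1)). -/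

import Mathlib

open Finset SimpleGraph

lemma maxprin {V : Type} [Fintype V] [DecidableEq V] (G : SimpleGraph V) [DecidableRel G.Adj]
    (hconn : G.Connected) (x : V) (g : V → ℝ)
    (hg : ∀ y, y ≠ x → (G.degree y : ℝ) * g y = ∑ z ∈ G.neighborFinset y, g z)
    (hgx : g x = 0) : ∀ y, g y ≤ 0 := by
  have hne : (Finset.univ : Finset V).Nonempty := ⟨x, mem_univ x⟩
  obtain ⟨y0, -, hy0⟩ := Finset.exists_max_image Finset.univ g hne
  set M := g y0 with hM
  have key : ∀ y, y ≠ x → g y = M → ∀ z ∈ G.neighborFinset y, g z = M := by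
    intro y hyx hym z hz
    by_contra hne'
    have hlt : g z < M := lt_of_le_of_ne (hy0 z (mem_univ z)) hne'
    have h1 : ∑ w ∈ G.neighborFinset y, g w < ∑ w ∈ G.neighborFinset y, M :=
      Finset.sum_lt_sum (fun w _ => hy0 w (mem_univ w)) ⟨z, hz, hlt⟩
    have h2 : ∑ w ∈ G.neighborFinset y, g w = (G.degree y : ℝ) * M := by
      rw [← hg y hyx, hym]
    rw [Finset.sum_const, nsmul_eq_mul, card_neighborFinset_eq_degree, h2] at h1
    exact lt_irrefl _ h1
  have walkind : ∀ (u v : V) (_w : G.Walk u v), g u = M → g v = M ∨ g x = M := by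
    intro u v w
    induction w with
    | nil => exact fun h => Or.inl h
    | @cons a c d h p ih =>
      intro ha
      by_cases hax : a = x
      · exact Or.inr (hax ▸ ha)
      · exact ih (key a hax ha c (by rwa [G.mem_neighborFinset]))
  have hMx : g x = M := by
    rcases walkind y0 x ((hconn y0 x).some) rfl with h | h <;> exact h
  intro y
  have := hy0 y (mem_univ y)
  rw [← hMx, hgx] at this
  exact this

lemma parity_walk {V : Type} (G : SimpleGraph V) (σ : V → Fin 2)
    (hbip : ∀ x y : V, G.Adj x y → σ x ≠ σ y) :
    ∀ (u v : V) (w : G.Walk u v), ((σ u : ℕ) + w.length) % 2 = (σ v : ℕ) % 2 := by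
  intro u v w
  induction w with
  | nil => simp
  | @cons a c d h p ih =>
    have hne : σ a ≠ σ c := hbip a c h
    have h2 : ((σ a : ℕ) + 1) % 2 = (σ c : ℕ) % 2 := by
      have ha := (σ a).is_lt
      have hc := (σ c).is_lt
      have : (σ a : ℕ) ≠ (σ c : ℕ) := fun hh => hne (Fin.ext hh)
      omega
    simp only [SimpleGraph.Walk.length_cons]
    omega

lemma parity_dist {V : Type} (G : SimpleGraph V) (hconn : G.Connected) (σ : V → Fin 2)
    (hbip : ∀ x y : V, G.Adj x y → σ x ≠ σ y) (u v : V) :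
    ((σ u : ℕ) + G.dist u v) % 2 = (σ v : ℕ) % 2 := by
  obtain ⟨p, hp⟩ := hconn.exists_walk_length_eq_dist u v
  rw [← hp]
  exact parity_walk G σ hbip u v p

lemma geo_step {V : Type} (G : SimpleGraph V) (hconn : G.Connected) (x y : V) (i : ℕ)
    (hd : G.dist x y = i + 1) : ∃ z, G.Adj y z ∧ G.dist x z = i := by
  obtain ⟨p, hp⟩ := hconn.exists_walk_length_eq_dist y x
  have hlen : p.length = i + 1 := by rw [hp, SimpleGraph.dist_comm]; exact hd
  have hnnil : ¬ p.Nil := by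
    rw [SimpleGraph.Walk.nil_iff_length_eq, hlen]; simp
  refine ⟨p.getVert 1, SimpleGraph.Walk.adj_snd hnnil, ?_⟩
  have htail : (p.tail).length = i := by
    have := SimpleGraph.Walk.length_tail_add_one hnnil
    omega
  have h1 : G.dist x (p.getVert 1) ≤ i := by
    rw [SimpleGraph.dist_comm, ← htail]
    exact SimpleGraph.dist_le p.tail
  have h2 : i + 1 ≤ G.dist x (p.getVert 1) + 1 := by
    calc i + 1 = G.dist x y := hd.symm
    _ ≤ G.dist x (p.getVert 1) + G.dist (p.getVert 1) y := hconn.dist_triangle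
    _ ≤ G.dist x (p.getVert 1) + 1 := by
        gcongr
        rw [SimpleGraph.dist_comm]
        exact le_of_eq ((SimpleGraph.dist_eq_one_iff_adj).mpr
          (SimpleGraph.Walk.adj_snd hnnil))
  omega

theorem stmt8 {V : Type} [Fintype V] [DecidableEq V]
    (G : SimpleGraph V) [DecidableRel G.Adj]
    (hconn : G.Connected) (hcard : 2 ≤ Fintype.card V)
    (σ : V → Fin 2)
    (hbip : ∀ x y : V, G.Adj x y → σ x ≠ σ y)
    (k : Fin 2 → ℕ)
    (hdeg : ∀ x : V, G.degree x = k (σ x))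
    (c b : Fin 2 → ℕ → ℕ)
    (hc : ∀ (x y : V) (i : ℕ), G.dist x y = i →
      (Finset.univ.filter (fun z => G.dist x z = i - 1 ∧ G.Adj y z)).card = c (σ x) i)
    (hb : ∀ (x y : V) (i : ℕ), G.dist x y = i →
      (Finset.univ.filter (fun z => G.dist x z = i + 1 ∧ G.Adj y z)).card = b (σ x) i)
    (D : Fin 2 → ℕ)
    (hDub : ∀ x y : V, G.dist x y ≤ D (σ x))
    (hDmax : ∀ ℓ : Fin 2, ∃ x y : V, σ x = ℓ ∧ G.dist x y = D ℓ)
    (hD0 : 1 ≤ D 0) (hD01 : D 0 ≤ D 1)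
    (kk : Fin 2 → ℕ → ℕ)
    (hkk : ∀ (x : V) (i : ℕ),
      (Finset.univ.filter (fun y => G.dist x y = i)).card = kk (σ x) i)
    (ν : V → V → ℝ)
    (hν0 : ∀ x : V, ν x x = 0)
    (hνL : ∀ x y : V, y ≠ x →
      (G.degree y : ℝ) * ν x y - ∑ z ∈ G.neighborFinset y, ν x z = 1)
    (q : Fin 2 → ℕ → ℝ)
    (hq : ∀ (ℓ : Fin 2) (m : ℕ), q ℓ m = ∑ j ∈ Finset.Icc 1 m,
      ((Fintype.card V : ℝ) - ∑ t ∈ Finset.range j, (kk ℓ t : ℝ)) /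
        ((kk ℓ j : ℝ) * (c ℓ j : ℝ))) :
    (∀ (x y : V) (m : ℕ), m ≤ D (σ x) →
      (ν x y = q (σ x) m ↔ G.dist x y = m)) ∧
    (∀ (ℓ : Fin 2) (m : ℕ), m ≤ D ℓ → q ℓ m = ∑ j ∈ Finset.range m,
      ((Fintype.card V : ℝ) - ∑ t ∈ Finset.range (j + 1), (kk ℓ t : ℝ)) /
        ((kk ℓ j : ℝ) * (b ℓ j : ℝ))) ∧
    (∀ ℓ : Fin 2, q ℓ 1 = ((Fintype.card V : ℝ) - 1) / (k ℓ : ℝ)) ∧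
    (∀ ℓ : Fin 2, q ℓ 2 = ((Fintype.card V : ℝ) - 1) / (k ℓ : ℝ) +
      ((Fintype.card V : ℝ) - 1 - (k ℓ : ℝ)) / ((k ℓ : ℝ) * ((k (1 - ℓ) : ℝ) - 1))) := by
  classical
  -- q at 0
  have hq0 : ∀ ℓ : Fin 2, q ℓ 0 = 0 := by
    intro ℓ; rw [hq]; simp
  -- q successive differences
  have hqdiff : ∀ (ℓ : Fin 2) (m : ℕ), q ℓ (m+1) = q ℓ m +
      ((Fintype.card V : ℝ) - ∑ t ∈ Finset.range (m+1), (kk ℓ t : ℝ)) /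
        ((kk ℓ (m+1) : ℝ) * (c ℓ (m+1) : ℝ)) := by
    intro ℓ m
    rw [hq, hq, Finset.sum_Icc_succ_top (by omega)]
  -- spheres are nonempty downward
  have hstep : ∀ (x : V) (i : ℕ), (∃ y, G.dist x y = i + 1) → ∃ y, G.dist x y = i := by
    rintro x i ⟨y, hy⟩
    obtain ⟨z, -, hz⟩ := geo_step G hconn x y i hy
    exact ⟨z, hz⟩
  have hsub : ∀ (x : V) (d i : ℕ), (∃ y, G.dist x y = i + d) → ∃ y, G.dist x y = i := by
    intro x d
    induction d with
    | zero => intro i h; simpa using h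
    | succ m ih =>
      intro i h
      exact hstep x i (ih (i+1) (by rwa [show i + (m+1) = i + 1 + m by omega] at h))
  have hsphere : ∀ (x : V) (i j : ℕ), i ≤ j → (∃ y, G.dist x y = j) → ∃ y, G.dist x y = i := by
    intro x i j hij hj
    exact hsub x (j - i) i (by rwa [show i + (j - i) = j by omega])
  -- positivity of sphere sizes
  have hkkpos : ∀ (ℓ : Fin 2) (i : ℕ), i ≤ D ℓ → 0 < kk ℓ i := by
    intro ℓ i hi
    obtain ⟨x', y', hσ, hdist⟩ := hDmax ℓ
    obtain ⟨y, hy⟩ := hsphere x' i (D ℓ) hi ⟨y', hdist⟩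
    have h := hkk x' i
    rw [hσ] at h
    rw [← h]
    exact Finset.card_pos.mpr ⟨y, by simp [hy]⟩
  -- existence of vertices at each distance
  have hex : ∀ (x : V) (i : ℕ), i ≤ D (σ x) → ∃ y, G.dist x y = i := by
    intro x i hi
    have h := hkk x i
    have hpos : 0 < (Finset.univ.filter (fun y => G.dist x y = i)).card := by
      rw [h]; exact hkkpos (σ x) i hi
    obtain ⟨y, hy⟩ := Finset.card_pos.mp hpos
    simp only [Finset.mem_filter, Finset.mem_univ, true_and] at hy
    exact ⟨y, hy⟩
  -- positivity of c
  have hcpos : ∀ (ℓ : Fin 2) (i : ℕ), 1 ≤ i → i ≤ D ℓ → 0 < c ℓ i := by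
    intro ℓ i h1 hi
    obtain ⟨x', y', hσ, hdist⟩ := hDmax ℓ
    obtain ⟨y, hy⟩ := hex x' i (by rwa [hσ])
    obtain ⟨z, hz1, hz2⟩ := geo_step G hconn x' y (i-1) (by omega)
    have h := hc x' y i hy
    rw [hσ] at h
    rw [← h]
    refine Finset.card_pos.mpr ⟨z, ?_⟩
    simp only [Finset.mem_filter, Finset.mem_univ, true_and]
    exact ⟨by omega, hz1⟩
  -- ball cardinality
  have hball : ∀ (x : V) (j : ℕ), (∑ t ∈ Finset.range j, kk (σ x) t)
      = (Finset.univ.filter (fun y => G.dist x y < j)).card := by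
    intro x j
    rw [Finset.card_eq_sum_card_fiberwise (f := fun y => G.dist x y) (t := Finset.range j)
      (by intro y hy
          simp only [Finset.coe_filter, Finset.mem_coe, Set.mem_setOf_eq, Finset.mem_filter, Finset.mem_univ, true_and] at hy
          simpa using hy)]
    apply Finset.sum_congr rfl
    intro t ht
    simp only [Finset.mem_range] at ht
    rw [← hkk x t]
    congr 1
    ext z
    simp only [Finset.mem_filter, Finset.mem_univ, true_and]
    omega
  -- total count
  have htotal : ∀ x : V, (∑ t ∈ Finset.range (D (σ x) + 1), kk (σ x) t) = Fintype.card V := by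
    intro x
    rw [hball x (D (σ x) + 1)]
    rw [show (Finset.univ.filter (fun y => G.dist x y < D (σ x) + 1)) = Finset.univ from by
      ext y; simp only [Finset.mem_filter, Finset.mem_univ, true_and, iff_true]
      have := hDub x y; omega]
    exact Finset.card_univ
  -- ball strictly smaller than everything for j ≤ D
  have hballlt : ∀ (ℓ : Fin 2) (j : ℕ), j ≤ D ℓ →
      (∑ t ∈ Finset.range j, kk ℓ t) < Fintype.card V := by
    intro ℓ j hj
    obtain ⟨x', y', hσ, hdist⟩ := hDmax ℓ
    obtain ⟨y, hy⟩ := hex x' j (by rwa [hσ])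
    rw [← hσ, hball x' j, ← Finset.card_univ]
    apply Finset.card_lt_card
    rw [Finset.ssubset_iff_of_subset (Finset.subset_univ _)]
    exact ⟨y, Finset.mem_univ y, by simp [hy]⟩
  -- neighbor dichotomy
  have hdich : ∀ (x y z : V) (i : ℕ), G.dist x y = i → 1 ≤ i → G.Adj y z →
      G.dist x z = i - 1 ∨ G.dist x z = i + 1 := by
    intro x y z i hi h1 ha
    have p1 := parity_dist G hconn σ hbip x y
    have p2 := parity_dist G hconn σ hbip x z
    have hσ' : ((σ y : ℕ)) ≠ (σ z : ℕ) := fun hh => (hbip y z ha) (Fin.ext hh)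
    have hyz : G.dist y z = 1 := SimpleGraph.dist_eq_one_iff_adj.mpr ha
    have hzy : G.dist z y = 1 := by rw [SimpleGraph.dist_comm]; exact hyz
    have t1 : G.dist x z ≤ i + 1 := by
      calc G.dist x z ≤ G.dist x y + G.dist y z := hconn.dist_triangle
      _ = i + 1 := by rw [hi, hyz]
    have t2 : i ≤ G.dist x z + 1 := by
      calc i = G.dist x y := hi.symm
      _ ≤ G.dist x z + G.dist z y := hconn.dist_triangle
      _ = G.dist x z + 1 := by rw [hzy]
    have v1 := (σ y).is_lt
    have v2 := (σ z).is_lt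
    rw [hi] at p1
    omega
  -- sum over neighbors of a radial function
  have hsplit : ∀ (x y : V) (i : ℕ), G.dist x y = i → 1 ≤ i → ∀ f : ℕ → ℝ,
      ∑ z ∈ G.neighborFinset y, f (G.dist x z)
        = (c (σ x) i : ℝ) * f (i-1) + (b (σ x) i : ℝ) * f (i+1) := by
    intro x y i hi h1 f
    have hnb : G.neighborFinset y = Finset.univ.filter (fun z => G.Adj y z) := by
      ext z; simp [SimpleGraph.mem_neighborFinset]
    have hset : (Finset.univ.filter (fun z => G.Adj y z)).filter (fun z => G.dist x z = i-1)
        = Finset.univ.filter (fun z => G.dist x z = i - 1 ∧ G.Adj y z) := by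
      ext z
      simp only [Finset.mem_filter, Finset.mem_univ, true_and]
      tauto
    have hset2 : (Finset.univ.filter (fun z => G.Adj y z)).filter (fun z => ¬ G.dist x z = i-1)
        = Finset.univ.filter (fun z => G.dist x z = i + 1 ∧ G.Adj y z) := by
      ext z
      simp only [Finset.mem_filter, Finset.mem_univ, true_and]
      constructor
      · rintro ⟨ha, hne⟩
        rcases hdich x y z i hi h1 ha with h | h
        · exact absurd h hne
        · exact ⟨h, ha⟩
      · rintro ⟨hd, ha⟩
        exact ⟨ha, by omega⟩
    rw [hnb, ← Finset.sum_filter_add_sum_filter_not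
      (Finset.univ.filter (fun z => G.Adj y z)) (fun z => G.dist x z = i - 1)
      (fun z => f (G.dist x z)), hset, hset2]
    have e1 : ∑ z ∈ Finset.univ.filter (fun z => G.dist x z = i - 1 ∧ G.Adj y z),
        f (G.dist x z) = (c (σ x) i : ℝ) * f (i-1) := by
      rw [Finset.sum_congr rfl (g := fun z => f (i-1)) (fun z hz => by
        simp only [Finset.mem_filter] at hz
        rw [hz.2.1])]
      rw [Finset.sum_const, nsmul_eq_mul, hc x y i hi]
    have e2 : ∑ z ∈ Finset.univ.filter (fun z => G.dist x z = i + 1 ∧ G.Adj y z),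
        f (G.dist x z) = (b (σ x) i : ℝ) * f (i+1) := by
      rw [Finset.sum_congr rfl (g := fun z => f (i+1)) (fun z hz => by
        simp only [Finset.mem_filter] at hz
        rw [hz.2.1])]
      rw [Finset.sum_const, nsmul_eq_mul, hb x y i hi]
    rw [e1, e2]
  -- degree splits as c + b
  have hdegsplit : ∀ (x y : V) (i : ℕ), G.dist x y = i → 1 ≤ i →
      (G.degree y : ℝ) = (c (σ x) i : ℝ) + (b (σ x) i : ℝ) := by
    intro x y i hi h1
    have h := hsplit x y i hi h1 (fun _ => (1:ℝ))
    simp only [mul_one] at h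
    rw [Finset.sum_const, nsmul_eq_mul, mul_one, card_neighborFinset_eq_degree] at h
    exact h
  -- edge counting between consecutive spheres
  have hedge : ∀ (ℓ : Fin 2) (j : ℕ), j + 1 ≤ D ℓ →
      kk ℓ j * b ℓ j = kk ℓ (j+1) * c ℓ (j+1) := by
    intro ℓ j hj
    obtain ⟨x', y', hσ, -⟩ := hDmax ℓ
    subst hσ
    have L1 : ∑ y ∈ Finset.univ.filter (fun y => G.dist x' y = j),
        (Finset.univ.filter (fun z => G.dist x' z = j + 1 ∧ G.Adj y z)).card
        = kk (σ x') j * b (σ x') j := by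
      rw [Finset.sum_congr rfl (g := fun _ => b (σ x') j) (fun y hy => by
        simp only [Finset.mem_filter] at hy
        exact hb x' y j hy.2)]
      rw [Finset.sum_const, smul_eq_mul, hkk x' j]
    have L2 : ∑ z ∈ Finset.univ.filter (fun z => G.dist x' z = j + 1),
        (Finset.univ.filter (fun w => G.dist x' w = j ∧ G.Adj z w)).card
        = kk (σ x') (j+1) * c (σ x') (j+1) := by
      rw [Finset.sum_congr rfl (g := fun _ => c (σ x') (j+1)) (fun z hz => by
        simp only [Finset.mem_filter] at hz
        have h := hc x' z (j+1) hz.2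
        simpa using h)]
      rw [Finset.sum_const, smul_eq_mul, hkk x' (j+1)]
    rw [← L1, ← L2]
    have lhs_eq : ∑ y ∈ Finset.univ.filter (fun y => G.dist x' y = j),
        (Finset.univ.filter (fun z => G.dist x' z = j + 1 ∧ G.Adj y z)).card
      = ∑ y : V, ∑ z : V,
          (if G.dist x' y = j ∧ G.dist x' z = j + 1 ∧ G.Adj y z then 1 else 0) := by
      rw [Finset.sum_filter]
      apply Finset.sum_congr rfl
      intro y _
      by_cases h : G.dist x' y = j
      · rw [if_pos h]
        simp only [h, true_and]
        exact Finset.card_filter _ _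
      · rw [if_neg h]
        symm
        apply Finset.sum_eq_zero
        intro z _
        rw [if_neg]
        tauto
    have rhs_eq : ∑ z ∈ Finset.univ.filter (fun z => G.dist x' z = j + 1),
        (Finset.univ.filter (fun w => G.dist x' w = j ∧ G.Adj z w)).card
      = ∑ z : V, ∑ w : V,
          (if G.dist x' z = j + 1 ∧ G.dist x' w = j ∧ G.Adj z w then 1 else 0) := by
      rw [Finset.sum_filter]
      apply Finset.sum_congr rfl
      intro z _
      by_cases h : G.dist x' z = j + 1
      · rw [if_pos h]
        simp only [h, true_and]
        exact Finset.card_filter _ _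
      · rw [if_neg h]
        symm
        apply Finset.sum_eq_zero
        intro w _
        rw [if_neg]
        tauto
    rw [lhs_eq, rhs_eq, Finset.sum_comm]
    apply Finset.sum_congr rfl
    intro z _
    apply Finset.sum_congr rfl
    intro y _
    refine if_congr ?_ rfl rfl
    constructor
    · rintro ⟨h1, h2, h3⟩; exact ⟨h2, h1, h3.symm⟩
    · rintro ⟨h1, h2, h3⟩; exact ⟨h2, h1, h3.symm⟩
  -- the radial function satisfies the equilibrium equations away from x
  have hLf : ∀ x y : V, y ≠ x →
      (G.degree y : ℝ) * q (σ x) (G.dist x y)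
        - ∑ z ∈ G.neighborFinset y, q (σ x) (G.dist x z) = 1 := by
    intro x y hyx
    set ℓ := σ x with hℓ
    set i := G.dist x y with hi
    have h1 : 1 ≤ i := hconn.pos_dist_of_ne (fun h => hyx h.symm)
    have hiD : i ≤ D ℓ := hDub x y
    have hsum : ∑ z ∈ G.neighborFinset y, q ℓ (G.dist x z)
        = (c ℓ i : ℝ) * q ℓ (i-1) + (b ℓ i : ℝ) * q ℓ (i+1) :=
      hsplit x y i hi.symm h1 (fun t => q ℓ t)
    have hdeg' : (G.degree y : ℝ) = (c ℓ i : ℝ) + (b ℓ i : ℝ) := hdegsplit x y i hi.symm h1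
    have hKpos : 0 < (kk ℓ i : ℝ) := by exact_mod_cast hkkpos ℓ i hiD
    have hCpos : 0 < (c ℓ i : ℝ) := by exact_mod_cast hcpos ℓ i h1 hiD
    have hqi : q ℓ i = q ℓ (i-1) +
        ((Fintype.card V : ℝ) - ∑ t ∈ Finset.range i, (kk ℓ t : ℝ)) /
          ((kk ℓ i : ℝ) * (c ℓ i : ℝ)) := by
      have h := hqdiff ℓ (i-1)
      rw [show i - 1 + 1 = i by omega] at h
      exact h
    rw [hsum, hdeg']
    by_cases hcase : i = D ℓ
    · -- top sphere: b ℓ i = 0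
      have hb0 : b ℓ i = 0 := by
        rw [← hb x y i hi.symm]
        rw [Finset.card_eq_zero]
        ext z
        simp only [Finset.mem_filter, Finset.mem_univ, true_and, Finset.notMem_empty,
          iff_false, not_and]
        intro hz
        exfalso
        have hle := hDub x z
        rw [hz, ← hℓ] at hle
        omega
      have hn : (Fintype.card V : ℝ)
          = (∑ t ∈ Finset.range i, (kk ℓ t : ℝ)) + (kk ℓ i : ℝ) := by
        have h := htotal x
        rw [← hℓ, ← hcase] at h
        rw [← h]
        push_cast [Finset.sum_range_succ]
        ring
      rw [hqi, hb0, hn]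
      push_cast
      field_simp
      ring
    · -- interior sphere
      have hiD' : i + 1 ≤ D ℓ := by omega
      have hK'pos : 0 < (kk ℓ (i+1) : ℝ) := by exact_mod_cast hkkpos ℓ (i+1) hiD'
      have hC'pos : 0 < (c ℓ (i+1) : ℝ) := by exact_mod_cast hcpos ℓ (i+1) (by omega) hiD'
      have hE : (kk ℓ i : ℝ) * (b ℓ i : ℝ) = (kk ℓ (i+1) : ℝ) * (c ℓ (i+1) : ℝ) := by
        exact_mod_cast hedge ℓ i hiD'
      have hBpos : 0 < (b ℓ i : ℝ) := by
        rcases (Nat.eq_zero_or_pos (b ℓ i)) with h0 | h0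
        · exfalso
          have hpos := mul_pos hK'pos hC'pos
          rw [← hE, h0] at hpos
          simp at hpos
        · exact_mod_cast h0
      have hqi1 : q ℓ (i+1) = q ℓ i +
          ((Fintype.card V : ℝ) - ∑ t ∈ Finset.range (i+1), (kk ℓ t : ℝ)) /
            ((kk ℓ (i+1) : ℝ) * (c ℓ (i+1) : ℝ)) := hqdiff ℓ i
      have hRs : (∑ t ∈ Finset.range (i+1), (kk ℓ t : ℝ))
          = (∑ t ∈ Finset.range i, (kk ℓ t : ℝ)) + (kk ℓ i : ℝ) := by
        rw [Finset.sum_range_succ]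
      rw [hqi1, hqi, hRs]
      set n : ℝ := (Fintype.card V : ℝ)
      set R : ℝ := ∑ t ∈ Finset.range i, (kk ℓ t : ℝ)
      set K : ℝ := (kk ℓ i : ℝ)
      set C : ℝ := (c ℓ i : ℝ)
      set B : ℝ := (b ℓ i : ℝ)
      set K' : ℝ := (kk ℓ (i+1) : ℝ)
      set C' : ℝ := (c ℓ (i+1) : ℝ)
      set qm : ℝ := q ℓ (i-1)
      have hgoal : (C + B) * (qm + (n - R) / (K * C))
          - (C * qm + B * ((qm + (n - R) / (K * C)) + (n - (R + K)) / (K' * C')))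
          = C * ((n - R) / (K * C)) - B * ((n - (R + K)) / (K' * C')) := by ring
      rw [hgoal]
      have e1 : C * ((n - R) / (K * C)) = (n - R) / K := by
        field_simp
      have e2 : B * ((n - (R + K)) / (K' * C')) = (n - (R + K)) / K := by
        rw [← hE]
        field_simp
      rw [e1, e2, div_sub_div_same]
      rw [show n - R - (n - (R + K)) = K by ring]
      exact div_self (ne_of_gt hKpos)
  -- equilibrium measure is radial
  have hrad : ∀ x y : V, ν x y = q (σ x) (G.dist x y) := by
    intro x y
    set g : V → ℝ := fun y => ν x y - q (σ x) (G.dist x y) with hgdef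
    have hgx : g x = 0 := by
      simp [hgdef, hν0 x, SimpleGraph.dist_self, hq0]
    have hg1 : ∀ y, y ≠ x → (G.degree y : ℝ) * g y = ∑ z ∈ G.neighborFinset y, g z := by
      intro y hyx
      have a1 := hνL x y hyx
      have a2 := hLf x y hyx
      simp only [hgdef]
      rw [Finset.sum_sub_distrib, mul_sub]
      linarith
    have hle := maxprin G hconn x g hg1 hgx
    have hge := maxprin G hconn x (fun y => - g y) (fun y hyx => by
      show (G.degree y : ℝ) * (- g y) = ∑ z ∈ G.neighborFinset y, (- g z)
      rw [Finset.sum_neg_distrib, ← hg1 y hyx]; ring) (by show -g x = 0; rw [hgx]; ring)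
    have h1 := hle y
    have h2 := hge y
    simp only [hgdef] at h1 h2
    linarith
  -- strict monotonicity of q
  have hlt : ∀ (ℓ : Fin 2) (j : ℕ), j + 1 ≤ D ℓ → q ℓ j < q ℓ (j+1) := by
    intro ℓ j hj
    rw [hqdiff ℓ j]
    have hnum : 0 < (Fintype.card V : ℝ) - ∑ t ∈ Finset.range (j+1), (kk ℓ t : ℝ) := by
      have h := hballlt ℓ (j+1) hj
      have h2 : ((∑ t ∈ Finset.range (j+1), kk ℓ t : ℕ) : ℝ) < (Fintype.card V : ℝ) := by
        exact_mod_cast h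
      push_cast at h2
      linarith
    have hden : 0 < (kk ℓ (j+1) : ℝ) * (c ℓ (j+1) : ℝ) := by
      apply mul_pos
      · exact_mod_cast hkkpos ℓ (j+1) hj
      · exact_mod_cast hcpos ℓ (j+1) (by omega) hj
    linarith [div_pos hnum hden]
  have hmono : ∀ (ℓ : Fin 2) (m m' : ℕ), m < m' → m' ≤ D ℓ → q ℓ m < q ℓ m' := by
    intro ℓ m m' hmm' hm'
    induction m' with
    | zero => omega
    | succ t ih =>
      rcases Nat.lt_succ_iff_lt_or_eq.mp hmm' with h | h
      · exact lt_trans (ih h (by omega)) (hlt ℓ t hm')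
      · rw [h]; exact hlt ℓ t hm'
  -- basic local data
  have hDpos : ∀ ℓ : Fin 2, 1 ≤ D ℓ := by
    intro ℓ
    fin_cases ℓ
    · exact hD0
    · exact le_trans hD0 hD01
  have hkk0 : ∀ ℓ : Fin 2, kk ℓ 0 = 1 := by
    intro ℓ
    obtain ⟨x', y', hσ, -⟩ := hDmax ℓ
    rw [← hσ, ← hkk x' 0]
    rw [show (Finset.univ.filter (fun y => G.dist x' y = 0)) = {x'} from by
      ext z
      simp only [Finset.mem_filter, Finset.mem_univ, true_and, Finset.mem_singleton]
      rw [hconn.dist_eq_zero_iff]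
      exact eq_comm]
    simp
  have hkk1 : ∀ ℓ : Fin 2, kk ℓ 1 = k ℓ := by
    intro ℓ
    obtain ⟨x', y', hσ, -⟩ := hDmax ℓ
    rw [← hσ, ← hkk x' 1, ← hdeg x']
    rw [show (Finset.univ.filter (fun y => G.dist x' y = 1)) = G.neighborFinset x' from by
      ext z
      simp [SimpleGraph.mem_neighborFinset, SimpleGraph.dist_eq_one_iff_adj]]
    exact card_neighborFinset_eq_degree G x'
  have hc1 : ∀ ℓ : Fin 2, c ℓ 1 = 1 := by
    intro ℓ
    obtain ⟨x', y', hσ, -⟩ := hDmax ℓ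
    obtain ⟨y, hy⟩ := hex x' 1 (by rw [hσ]; exact hDpos ℓ)
    have hadj : G.Adj x' y := SimpleGraph.dist_eq_one_iff_adj.mp hy
    rw [← hσ, ← hc x' y 1 hy]
    rw [show (Finset.univ.filter (fun z => G.dist x' z = 1 - 1 ∧ G.Adj y z)) = {x'} from by
      ext z
      simp only [Finset.mem_filter, Finset.mem_univ, true_and, Finset.mem_singleton]
      constructor
      · rintro ⟨h0, -⟩
        exact ((hconn.dist_eq_zero_iff).mp (by simpa using h0)).symm
      · rintro rfl
        exact ⟨by simp [SimpleGraph.dist_self], hadj.symm⟩]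
    simp
  -- part 3
  have part3 : ∀ ℓ : Fin 2, q ℓ 1 = ((Fintype.card V : ℝ) - 1) / (k ℓ : ℝ) := by
    intro ℓ
    have h := hqdiff ℓ 0
    rw [hq0 ℓ, zero_add] at h
    rw [h]
    rw [Finset.sum_range_one, hkk0 ℓ, hkk1 ℓ, hc1 ℓ]
    push_cast
    ring_nf
  -- part 2
  have part2 : ∀ (ℓ : Fin 2) (m : ℕ), m ≤ D ℓ → q ℓ m = ∑ j ∈ Finset.range m,
      ((Fintype.card V : ℝ) - ∑ t ∈ Finset.range (j + 1), (kk ℓ t : ℝ)) /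
        ((kk ℓ j : ℝ) * (b ℓ j : ℝ)) := by
    intro ℓ m hm
    rw [hq]
    rw [show Finset.Icc 1 m = Finset.Ico 1 (m+1) from by rw [Finset.Ico_add_one_right_eq_Icc]]
    rw [Finset.sum_Ico_eq_sum_range]
    simp only [Nat.add_sub_cancel]
    apply Finset.sum_congr rfl
    intro j hj
    simp only [Finset.mem_range] at hj
    have hE := hedge ℓ j (by omega)
    rw [show 1 + j = j + 1 from by omega]
    congr 1
    exact_mod_cast hE.symm
  -- part 4
  have part4 : ∀ ℓ : Fin 2, q ℓ 2 = ((Fintype.card V : ℝ) - 1) / (k ℓ : ℝ) +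
      ((Fintype.card V : ℝ) - 1 - (k ℓ : ℝ)) / ((k ℓ : ℝ) * ((k (1 - ℓ) : ℝ) - 1)) := by
    intro ℓ
    have h2 := hqdiff ℓ 1
    have hR2 : (∑ t ∈ Finset.range 2, (kk ℓ t : ℝ)) = 1 + (k ℓ : ℝ) := by
      rw [Finset.sum_range_succ, Finset.sum_range_one, hkk0 ℓ, hkk1 ℓ]
      push_cast
      ring
    by_cases hD2 : 2 ≤ D ℓ
    · have hb1 : (b ℓ 1 : ℝ) = (k (1 - ℓ) : ℝ) - 1 := by
        obtain ⟨x', y', hσ, -⟩ := hDmax ℓ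
        obtain ⟨y, hy⟩ := hex x' 1 (by rw [hσ]; exact hDpos ℓ)
        have hds := hdegsplit x' y 1 hy le_rfl
        have hadj : G.Adj x' y := SimpleGraph.dist_eq_one_iff_adj.mp hy
        have hσy : σ y = 1 - ℓ := by
          have hne : σ y ≠ ℓ := by rw [← hσ]; exact (hbip x' y hadj).symm
          exact (by decide : ∀ a b : Fin 2, a ≠ b → a = 1 - b) (σ y) ℓ hne
        rw [hdeg y, hσy, hσ, hc1 ℓ] at hds
        push_cast at hds
        linarith
      have hE : (kk ℓ 2 : ℝ) * (c ℓ 2 : ℝ) = (k ℓ : ℝ) * ((k (1 - ℓ) : ℝ) - 1) := by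
        have h := hedge ℓ 1 hD2
        rw [hkk1 ℓ] at h
        have h' : (k ℓ : ℝ) * (b ℓ 1 : ℝ) = (kk ℓ 2 : ℝ) * (c ℓ 2 : ℝ) := by
          exact_mod_cast h
        rw [← h', hb1]
      rw [h2, part3 ℓ, hR2, hE]
      ring
    · have hD1 : D ℓ = 1 := by have := hDpos ℓ; omega
      have hkk2 : kk ℓ 2 = 0 := by
        obtain ⟨x', y', hσ, -⟩ := hDmax ℓ
        rw [← hσ, ← hkk x' 2]
        rw [Finset.card_eq_zero]
        ext z
        simp only [Finset.mem_filter, Finset.mem_univ, true_and, Finset.notMem_empty,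
          iff_false]
        intro hz
        have hle := hDub x' z
        rw [hz, hσ, hD1] at hle
        omega
      have hntot : (Fintype.card V : ℝ) = 1 + (k ℓ : ℝ) := by
        obtain ⟨x', y', hσ, -⟩ := hDmax ℓ
        have h := htotal x'
        rw [hσ, hD1] at h
        have h' : ((∑ t ∈ Finset.range 2, kk ℓ t : ℕ) : ℝ) = (Fintype.card V : ℝ) := by
          exact_mod_cast congrArg Nat.cast h
        rw [← h']
        push_cast [Finset.sum_range_succ, Finset.sum_range_one, hkk0 ℓ, hkk1 ℓ]
        ring
      rw [h2, part3 ℓ, hR2, hkk2]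
      rw [show ((0:ℕ):ℝ) = (0:ℝ) from by norm_num, zero_mul, div_zero]
      rw [show (Fintype.card V : ℝ) - 1 - (k ℓ : ℝ) = 0 from by rw [hntot]; ring, zero_div]
  refine ⟨?_, part2, part3, part4⟩
  intro x y m hm
  constructor
  · intro h
    have hr := hrad x y
    have hd := hDub x y
    by_contra hne
    have heq : q (σ x) (G.dist x y) = q (σ x) m := by rw [← hr, h]
    rcases Nat.lt_or_ge (G.dist x y) m with hlt' | hge
    · have := hmono (σ x) (G.dist x y) m hlt' hm
      linarith
    · have hgt : m < G.dist x y := by omega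
      have := hmono (σ x) m (G.dist x y) hgt hd
      linarith
  · intro h
    rw [hrad x y, h]
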